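/- There exists N such that for every integer n ≥ N and every real number f with 4 < f < n/4, there exists a graph G with n vertices such that every edge of G is contained in a triangle, e(G) > n²/4 − f·n, and bk(G) < n/(2√(2f)). Explicitly, with k = ⌊√(2f)⌋ and n = 2kt + k² + s where 0 ≤ s < 2k, one may take the graph on vertex set A ∪ B₁ ∪ ... ∪ B_k ∪ C₁ ∪ ... ∪ C_k ∪ S with |A| = k², |B_i| = |C_i| = t, |S| = s, every vertex of ∪B_i joined to every vertex of ∪C_i, the vertices of A labelled a_{ij} (i, j ∈ {1,...,k}) with a_{ij} joined to all vertices of B_i ∪ C_j, and S having no edges. -/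

import Mathlib

open Finset
open scoped Classical

/-- The booksize of `G`: the maximum over edges `uv` of `G` of the number of
common neighbors of `u` and `v` (`0` if `G` has no edges). -/
noncomputable def bk {V : Type*} [Fintype V] (G : SimpleGraph V) : ℕ :=
  (Finset.univ.filter fun p : V × V => G.Adj p.1 p.2).sup
    fun p => (G.neighborSet p.1 ∩ G.neighborSet p.2).ncard

/-- The number of `s`-cliques of `G`. -/
noncomputable def cliqueCount {V : Type*} [Fintype V] (G : SimpleGraph V) (s : ℕ) : ℕ :=
  (G.cliqueFinset s).card

/-- The number of induced subgraphs of `G` isomorphic to `H`. -/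
noncomputable def inducedCopies {V W : Type*} [Fintype V] (G : SimpleGraph V)
    (H : SimpleGraph W) : ℕ :=
  {s : Set V | Nonempty (G.induce s ≃g H)}.ncard

/-- `K4j j` is the graph `K₄^(j)`: a triangle on `{0,1,2}` together with the vertex `3`
joined to precisely `3 - j` of its vertices. -/
def K4j (j : ℕ) : SimpleGraph (Fin 4) :=
  SimpleGraph.fromRel fun a b => (a.val < 3 ∧ b.val < 3) ∨ (a.val = 3 ∧ b.val < 3 - j)

/-- The codegree function `d̂`, as a function on unordered pairs. -/
noncomputable def codegSym {V : Type*} [Fintype V] (G : SimpleGraph V) : Sym2 V → ℕ :=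
  Sym2.lift ⟨fun u v => (G.neighborSet u ∩ G.neighborSet v).ncard,
    fun u v => by simp [Set.inter_comm]⟩

/-- `|Γ'(u) ∩ Γ'(v)|`, where `Γ'(x) = V ∖ Γ(x)`, as a function on unordered pairs. -/
noncomputable def noncodegSym {V : Type*} [Fintype V] (G : SimpleGraph V) : Sym2 V → ℕ :=
  Sym2.lift ⟨fun u v => ((G.neighborSet u)ᶜ ∩ (G.neighborSet v)ᶜ).ncard,
    fun u v => by simp [Set.inter_comm]⟩

namespace S16



/-- number of elements of `Fin n` in `[a, a+N)` with residue `j` mod `k` is at most `N/k + 1` -/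
lemma card_class_le (n a N k j : ℕ) (hk : 0 < k) :
    (univ.filter fun w : Fin n => a ≤ w.val ∧ w.val < a + N ∧ (w.val - a) % k = j).card
      ≤ N / k + 1 := by
  have h := Finset.card_le_card_of_injOn (fun w : Fin n => (w.val - a) / k)
    (s := univ.filter fun w : Fin n => a ≤ w.val ∧ w.val < a + N ∧ (w.val - a) % k = j)
    (t := Finset.range (N / k + 1)) ?_ ?_
  · simpa using h
  · intro w hw
    simp only [mem_coe, mem_filter, mem_univ, true_and] at hw
    simp only [mem_coe, mem_range]
    have h1 : w.val - a ≤ N := by omega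
    exact Nat.lt_succ_of_le (Nat.div_le_div_right h1)
  · intro w1 h1 w2 h2 h
    simp only [coe_filter, Set.mem_setOf_eq, mem_univ, true_and] at h1 h2
    have h' : (w1.val - a) / k = (w2.val - a) / k := h
    have e : w1.val - a = w2.val - a := by
      calc w1.val - a = k * ((w1.val - a) / k) + (w1.val - a) % k := (Nat.div_add_mod _ _).symm
        _ = k * ((w2.val - a) / k) + (w2.val - a) % k := by rw [h', h1.2.2, h2.2.2]
        _ = w2.val - a := Nat.div_add_mod _ _
    exact Fin.ext (by omega)

lemma le_card_class (n a N k j : ℕ) (hk : 0 < k) (hj : j < k) (hN : a + N ≤ n) :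
    N / k ≤ (univ.filter fun w : Fin n => a ≤ w.val ∧ w.val < a + N ∧ (w.val - a) % k = j).card := by
  rw [← Finset.card_image_of_injective
    (univ.filter fun w : Fin n => a ≤ w.val ∧ w.val < a + N ∧ (w.val - a) % k = j)
    Fin.val_injective]
  have h := Finset.card_le_card_of_injOn (fun q : ℕ => a + (j + q * k))
    (s := Finset.range (N / k))
    (t := (univ.filter fun w : Fin n => a ≤ w.val ∧ w.val < a + N ∧ (w.val - a) % k = j).image Fin.val)
    ?_ ?_
  · simpa using h
  · intro q hq
    simp only [mem_coe, mem_range] at hq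
    have hlt : j + q * k < N := by
      have h1 : (q + 1) * k ≤ (N / k) * k := Nat.mul_le_mul_right k hq
      have h2 : (N / k) * k ≤ N := Nat.div_mul_le_self N k
      have := Nat.one_mul k
      nlinarith
    refine Finset.mem_image.2 ⟨⟨a + (j + q * k), by omega⟩, ?_, rfl⟩
    simp only [mem_filter, mem_univ, true_and]
    refine ⟨by omega, by omega, ?_⟩
    have : a + (j + q * k) - a = j + q * k := by omega
    rw [this, Nat.add_mul_mod_self_right, Nat.mod_eq_of_lt hj]
  · intro q1 _ q2 _ h
    have h' : a + (j + q1 * k) = a + (j + q2 * k) := h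
    have : q1 * k = q2 * k := by omega
    exact Nat.eq_of_mul_eq_mul_right hk this

lemma card_Ico_val (n a b : ℕ) (hb : b ≤ n) :
    (univ.filter fun w : Fin n => a ≤ w.val ∧ w.val < b).card = b - a := by
  rw [← Nat.card_Ico a b]
  apply Finset.card_bij (fun w _ => w.val)
  · intro w hw
    simp only [mem_filter, mem_univ, true_and] at hw
    simp only [Finset.mem_Ico]
    exact hw
  · intro w1 _ w2 _ h
    exact Fin.ext h
  · intro x hx
    simp only [Finset.mem_Ico] at hx
    exact ⟨⟨x, by omega⟩, by simp; omega, rfl⟩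



def rel (A β k : ℕ) {n : ℕ} (u v : Fin n) : Prop :=
  (u.val < A ∧ A ≤ v.val ∧
    ((v.val < A + β ∧ (v.val - A) % k = u.val / k) ∨
     (A + β ≤ v.val ∧ (v.val - (A + β)) % k = u.val % k)))
  ∨ (A ≤ u.val ∧ u.val < A + β ∧ A + β ≤ v.val)

def graph (A β k n : ℕ) : SimpleGraph (Fin n) := SimpleGraph.fromRel (rel A β k)

lemma adj_iff {A β k n : ℕ} {u v : Fin n} :
    (graph A β k n).Adj u v ↔ u ≠ v ∧ (rel A β k u v ∨ rel A β k v u) := by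
  simp [graph, SimpleGraph.fromRel_adj]

lemma triangle_aux {k β γ n : ℕ} (hk : 0 < k) (hβ : k ≤ β) (hγ : k ≤ γ)
    (hn : n = k * k + β + γ) (u v : Fin n) (h : rel (k*k) β k u v) :
    ∃ w, (graph (k*k) β k n).Adj u w ∧ (graph (k*k) β k n).Adj v w := by
  rcases h with ⟨hu, hv, hbc⟩ | ⟨h1, h2, h3⟩
  · have humod : u.val % k < k := Nat.mod_lt _ hk
    have hudiv : u.val / k < k := (Nat.div_lt_iff_lt_mul hk).2 hu
    set D := u.val / k with hD
    set M := u.val % k with hM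
    rcases hbc with ⟨hvB, hres⟩ | ⟨hvC, hres⟩
    · -- u ∈ A, v ∈ B; take w in C with residue u % k
      refine ⟨⟨k*k + β + M, by omega⟩, ?_, ?_⟩
      · rw [adj_iff]
        refine ⟨Fin.ne_of_val_ne ?_, Or.inl (Or.inl ⟨hu, ?_, Or.inr ⟨?_, ?_⟩⟩)⟩
        · show u.val ≠ k*k + β + M; omega
        · show k*k ≤ k*k + β + M; omega
        · show k*k + β ≤ k*k + β + M; omega
        · show (k*k + β + M - (k*k + β)) % k = M
          have e : k*k + β + M - (k*k + β) = M := by omega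
          rw [e, Nat.mod_eq_of_lt humod]
      · rw [adj_iff]
        refine ⟨Fin.ne_of_val_ne ?_, Or.inl (Or.inr ⟨?_, ?_, ?_⟩)⟩
        · show v.val ≠ k*k + β + M; omega
        · show k*k ≤ v.val; omega
        · exact hvB
        · show k*k + β ≤ k*k + β + M; omega
    · -- u ∈ A, v ∈ C; take w in B with residue u / k
      refine ⟨⟨k*k + D, by have := Nat.lt_of_lt_of_le hudiv hβ; omega⟩, ?_, ?_⟩
      · rw [adj_iff]
        refine ⟨Fin.ne_of_val_ne ?_, Or.inl (Or.inl ⟨hu, ?_, Or.inl ⟨?_, ?_⟩⟩)⟩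
        · exact Nat.ne_of_lt (Nat.lt_of_lt_of_le hu (Nat.le_add_right _ _))
        · exact Nat.le_add_right _ _
        · exact Nat.add_lt_add_left (Nat.lt_of_lt_of_le hudiv hβ) _
        · show (k*k + D - k*k) % k = D
          rw [Nat.add_sub_cancel_left, Nat.mod_eq_of_lt hudiv]
      · rw [adj_iff]
        refine ⟨Fin.ne_of_val_ne ?_, Or.inr (Or.inr ⟨?_, ?_, ?_⟩)⟩
        · exact Nat.ne_of_gt (Nat.lt_of_lt_of_le
            (Nat.add_lt_add_left (Nat.lt_of_lt_of_le hudiv hβ) _) hvC)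
        · exact Nat.le_add_right _ _
        · exact Nat.add_lt_add_left (Nat.lt_of_lt_of_le hudiv hβ) _
        · exact hvC
  · -- u ∈ B, v ∈ C; take w = a_{ij}
    have hi : (u.val - k*k) % k < k := Nat.mod_lt _ hk
    have hj : (v.val - (k*k + β)) % k < k := Nat.mod_lt _ hk
    set i := (u.val - k*k) % k with hidef
    set j := (v.val - (k*k + β)) % k with hjdef
    have hw : i * k + j < k * k := by
      have h1' : i * k + j < (i+1) * k := by
        have : (i+1) * k = i * k + k := by ring
        omega
      have h2' : (i+1) * k ≤ k * k := Nat.mul_le_mul_right k hi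
      omega
    have hdiv : (i * k + j) / k = i := by
      rw [Nat.add_comm, Nat.add_mul_div_right j i hk, Nat.div_eq_of_lt hj, Nat.zero_add]
    have hmod : (i * k + j) % k = j := by
      rw [Nat.add_comm, Nat.add_mul_mod_self_right, Nat.mod_eq_of_lt hj]
    refine ⟨⟨i * k + j, by omega⟩, ?_, ?_⟩
    · rw [adj_iff]
      refine ⟨Fin.ne_of_val_ne ?_, Or.inr (Or.inl ⟨?_, ?_, Or.inl ⟨h2, ?_⟩⟩)⟩
      · show u.val ≠ i * k + j; omega
      · show (i * k + j : ℕ) < k*k; exact hw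
      · show k*k ≤ u.val; exact h1
      · show (u.val - k*k) % k = (i * k + j) / k
        rw [hdiv]
    · rw [adj_iff]
      refine ⟨Fin.ne_of_val_ne ?_, Or.inr (Or.inl ⟨?_, ?_, Or.inr ⟨h3, ?_⟩⟩)⟩
      · show v.val ≠ i * k + j; omega
      · show (i * k + j : ℕ) < k*k; exact hw
      · show k*k ≤ v.val; omega
      · show (v.val - (k*k + β)) % k = (i * k + j) % k
        rw [hmod]

lemma triangle {k β γ n : ℕ} (hk : 0 < k) (hβ : k ≤ β) (hγ : k ≤ γ)
    (hn : n = k * k + β + γ) (u v : Fin n) (h : (graph (k*k) β k n).Adj u v) :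
    ∃ w, (graph (k*k) β k n).Adj u w ∧ (graph (k*k) β k n).Adj v w := by
  rw [adj_iff] at h
  rcases h.2 with h' | h'
  · exact triangle_aux hk hβ hγ hn u v h'
  · obtain ⟨w, hw1, hw2⟩ := triangle_aux hk hβ hγ hn v u h'
    exact ⟨w, hw2, hw1⟩

lemma adjA {k β γ n : ℕ} (hn : n = k * k + β + γ) {u w : Fin n} (hu : u.val < k*k)
    (h : (graph (k*k) β k n).Adj u w) :
    (k*k ≤ w.val ∧ w.val < k*k + β ∧ (w.val - k*k) % k = u.val / k) ∨
    (k*k + β ≤ w.val ∧ (w.val - (k*k + β)) % k = u.val % k) := by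
  rw [adj_iff] at h
  rcases h.2 with (⟨a1,b1,⟨c1,d1⟩|⟨c1,d1⟩⟩ | ⟨a1,b1,c1⟩) | (⟨a2,b2,⟨c2,d2⟩|⟨c2,d2⟩⟩ | ⟨a2,b2,c2⟩)
  · exact Or.inl ⟨b1, c1, d1⟩
  · exact Or.inr ⟨c1, d1⟩
  · exact absurd a1 (by omega)
  · exact absurd b2 (by omega)
  · exact absurd b2 (by omega)
  · exact absurd a2 (by omega)

lemma adjB {k β γ n : ℕ} (hn : n = k * k + β + γ) {u w : Fin n}
    (hu1 : k*k ≤ u.val) (hu2 : u.val < k*k + β)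
    (h : (graph (k*k) β k n).Adj u w) :
    (k*k + β ≤ w.val) ∨ (w.val < k*k ∧ (u.val - k*k) % k = w.val / k) := by
  rw [adj_iff] at h
  rcases h.2 with (⟨a1,b1,⟨c1,d1⟩|⟨c1,d1⟩⟩ | ⟨a1,b1,c1⟩) | (⟨a2,b2,⟨c2,d2⟩|⟨c2,d2⟩⟩ | ⟨a2,b2,c2⟩)
  · exact absurd a1 (by omega)
  · exact absurd a1 (by omega)
  · exact Or.inl c1
  · exact Or.inr ⟨a2, d2⟩
  · exact absurd c2 (by omega)
  · exact absurd c2 (by omega)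

lemma adjC {k β γ n : ℕ} (hn : n = k * k + β + γ) {v w : Fin n}
    (hv : k*k + β ≤ v.val)
    (h : (graph (k*k) β k n).Adj v w) :
    (k*k ≤ w.val ∧ w.val < k*k + β) ∨
    (w.val < k*k ∧ (v.val - (k*k + β)) % k = w.val % k) := by
  rw [adj_iff] at h
  rcases h.2 with (⟨a1,b1,⟨c1,d1⟩|⟨c1,d1⟩⟩ | ⟨a1,b1,c1⟩) | (⟨a2,b2,⟨c2,d2⟩|⟨c2,d2⟩⟩ | ⟨a2,b2,c2⟩)
  · exact absurd a1 (by omega)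
  · exact absurd a1 (by omega)
  · exact absurd b1 (by omega)
  · exact absurd c2 (by omega)
  · exact Or.inr ⟨a2, d2⟩
  · exact Or.inl ⟨a2, b2⟩

lemma codeg_aux {k β γ n : ℕ} (hk : 0 < k) (hγβ : γ ≤ β) (hn : n = k * k + β + γ)
    (u v : Fin n) (h : rel (k*k) β k u v) :
    ((graph (k*k) β k n).neighborSet u ∩ (graph (k*k) β k n).neighborSet v).ncard
      ≤ β / k + 1 := by
  have ncard_le : ∀ (T : Finset (Fin n)),
      ((graph (k*k) β k n).neighborSet u ∩ (graph (k*k) β k n).neighborSet v ⊆ ↑T) →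
      ((graph (k*k) β k n).neighborSet u ∩ (graph (k*k) β k n).neighborSet v).ncard
        ≤ T.card := fun T hsub =>
    le_trans (Set.ncard_le_ncard hsub T.finite_toSet) (le_of_eq (Set.ncard_coe_finset T))
  rcases h with ⟨hu, hv, ⟨hvB, hres⟩ | ⟨hvC, hres⟩⟩ | ⟨h1, h2, h3⟩
  · -- u ∈ A, v ∈ B : common neighbours lie in C_j
    refine le_trans (ncard_le (univ.filter fun w : Fin n =>
      k*k + β ≤ w.val ∧ w.val < (k*k + β) + γ ∧ (w.val - (k*k + β)) % k = u.val % k) ?_)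
      (le_trans (card_class_le n (k*k+β) γ k (u.val % k) hk)
        (Nat.add_le_add_right (Nat.div_le_div_right hγβ) 1))
    rintro w ⟨hw1, hw2⟩
    rw [SimpleGraph.mem_neighborSet] at hw1 hw2
    simp only [coe_filter, Set.mem_setOf_eq, mem_univ, true_and]
    rcases adjA hn hu hw1 with ⟨e1, e2, e3⟩ | ⟨e1, e2⟩
    · exfalso
      rcases adjB hn (by omega) hvB hw2 with e4 | ⟨e4, e5⟩ <;> omega
    · exact ⟨e1, by omega, e2⟩
  · -- u ∈ A, v ∈ C : common neighbours lie in B_i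
    refine le_trans (ncard_le (univ.filter fun w : Fin n =>
      k*k ≤ w.val ∧ w.val < k*k + β ∧ (w.val - k*k) % k = u.val / k) ?_)
      (card_class_le n (k*k) β k (u.val / k) hk)
    rintro w ⟨hw1, hw2⟩
    rw [SimpleGraph.mem_neighborSet] at hw1 hw2
    simp only [coe_filter, Set.mem_setOf_eq, mem_univ, true_and]
    rcases adjA hn hu hw1 with ⟨e1, e2, e3⟩ | ⟨e1, e2⟩
    · exact ⟨e1, e2, e3⟩
    · exfalso
      rcases adjC hn hvC hw2 with ⟨e4, e5⟩ | ⟨e4, e5⟩ <;> omega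
  · -- u ∈ B, v ∈ C : unique common neighbour in A
    refine le_trans (ncard_le (univ.filter fun w : Fin n =>
      w.val < k*k ∧ (u.val - k*k) % k = w.val / k ∧ (v.val - (k*k+β)) % k = w.val % k) ?_) ?_
    · rintro w ⟨hw1, hw2⟩
      rw [SimpleGraph.mem_neighborSet] at hw1 hw2
      simp only [coe_filter, Set.mem_setOf_eq, mem_univ, true_and]
      rcases adjB hn h1 h2 hw1 with e1 | ⟨e1, e2⟩
      · rcases adjC hn h3 hw2 with ⟨e4, e5⟩ | ⟨e4, e5⟩ <;> (exfalso; omega)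
      · rcases adjC hn h3 hw2 with ⟨e4, e5⟩ | ⟨e4, e5⟩
        · exfalso; omega
        · exact ⟨e1, e2, e5⟩
    · have hcard : (univ.filter fun w : Fin n =>
        w.val < k*k ∧ (u.val - k*k) % k = w.val / k ∧ (v.val - (k*k+β)) % k = w.val % k).card ≤ 1 := by
        rw [Finset.card_le_one]
        intro a ha b hb
        simp only [mem_filter, mem_univ, true_and] at ha hb
        apply Fin.ext
        calc a.val = k * (a.val / k) + a.val % k := (Nat.div_add_mod _ _).symm
          _ = k * (b.val / k) + b.val % k := by
              rw [← ha.2.1, ← ha.2.2, hb.2.1, hb.2.2]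
          _ = b.val := Nat.div_add_mod _ _
      exact le_trans hcard (Nat.le_add_left 1 _)

lemma codeg {k β γ n : ℕ} (hk : 0 < k) (hγβ : γ ≤ β) (hn : n = k * k + β + γ)
    (u v : Fin n) (h : (graph (k*k) β k n).Adj u v) :
    ((graph (k*k) β k n).neighborSet u ∩ (graph (k*k) β k n).neighborSet v).ncard
      ≤ β / k + 1 := by
  rw [adj_iff] at h
  rcases h.2 with h' | h'
  · exact codeg_aux hk hγβ hn u v h'
  · rw [Set.inter_comm]
    exact codeg_aux hk hγβ hn v u h'

lemma degB {k β γ n : ℕ} (hk : 0 < k) (hn : n = k * k + β + γ) (v : Fin n)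
    (hv1 : k*k ≤ v.val) (hv2 : v.val < k*k + β) :
    γ + k ≤ (graph (k*k) β k n).degree v := by
  classical
  set G := graph (k*k) β k n with hG
  set i := (v.val - k*k) % k with hi
  have hik : i < k := Nat.mod_lt _ hk
  have hikk : i * k + k ≤ k * k := by
    have : (i + 1) * k ≤ k * k := Nat.mul_le_mul_right k hik
    nlinarith
  set T1 := univ.filter (fun w : Fin n => k*k + β ≤ w.val ∧ w.val < (k*k + β) + γ) with hT1
  set T2 := univ.filter (fun w : Fin n => i * k ≤ w.val ∧ w.val < i * k + k) with hT2
  have hsub : T1 ∪ T2 ⊆ G.neighborFinset v := by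
    intro w hw
    rw [SimpleGraph.mem_neighborFinset]
    rcases Finset.mem_union.1 hw with hw | hw
    · simp only [hT1, mem_filter, mem_univ, true_and] at hw
      rw [adj_iff]
      exact ⟨Fin.ne_of_val_ne (by omega), Or.inl (Or.inr ⟨hv1, hv2, hw.1⟩)⟩
    · simp only [hT2, mem_filter, mem_univ, true_and] at hw
      have hwdiv : w.val / k = i := by
        have hr : w.val = i * k + (w.val - i * k) := by omega
        rw [hr, Nat.add_comm, Nat.add_mul_div_right _ _ hk,
          Nat.div_eq_of_lt (by omega), Nat.zero_add]
      rw [adj_iff]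
      refine ⟨Fin.ne_of_val_ne (by omega), Or.inr (Or.inl ⟨by omega, hv1, Or.inl ⟨hv2, ?_⟩⟩)⟩
      rw [hwdiv]
  have hdisj : Disjoint T1 T2 := by
    rw [Finset.disjoint_left]
    intro w hw1 hw2
    simp only [hT1, hT2, mem_filter, mem_univ, true_and] at hw1 hw2
    omega
  have hcard : T1.card = γ ∧ T2.card = k := by
    constructor
    · rw [hT1, card_Ico_val n (k*k+β) ((k*k+β)+γ) (by omega)]; omega
    · rw [hT2, card_Ico_val n (i*k) (i*k+k) (by omega)]; omega
  calc γ + k = (T1 ∪ T2).card := by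
        rw [Finset.card_union_of_disjoint hdisj, hcard.1, hcard.2]
    _ ≤ (G.neighborFinset v).card := Finset.card_le_card hsub
    _ = G.degree v := rfl

lemma degC {k β γ n : ℕ} (hk : 0 < k) (hn : n = k * k + β + γ) (v : Fin n)
    (hv1 : k*k + β ≤ v.val) :
    β + k ≤ (graph (k*k) β k n).degree v := by
  classical
  set G := graph (k*k) β k n with hG
  set j := (v.val - (k*k + β)) % k with hj
  have hjk : j < k := Nat.mod_lt _ hk
  set T1 := univ.filter (fun w : Fin n => k*k ≤ w.val ∧ w.val < k*k + β) with hT1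
  set T2 := univ.filter (fun w : Fin n => 0 ≤ w.val ∧ w.val < 0 + k*k ∧ (w.val - 0) % k = j) with hT2
  have hsub : T1 ∪ T2 ⊆ G.neighborFinset v := by
    intro w hw
    rw [SimpleGraph.mem_neighborFinset]
    rcases Finset.mem_union.1 hw with hw | hw
    · simp only [hT1, mem_filter, mem_univ, true_and] at hw
      rw [adj_iff]
      exact ⟨Fin.ne_of_val_ne (by omega), Or.inr (Or.inr ⟨hw.1, hw.2, hv1⟩)⟩
    · simp only [hT2, mem_filter, mem_univ, true_and] at hw
      rw [adj_iff]
      refine ⟨Fin.ne_of_val_ne (by omega), Or.inr (Or.inl ⟨by omega, by omega, Or.inr ⟨hv1, ?_⟩⟩)⟩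
      have : w.val - 0 = w.val := by omega
      rw [← this, hw.2.2]
  have hdisj : Disjoint T1 T2 := by
    rw [Finset.disjoint_left]
    intro w hw1 hw2
    simp only [hT1, hT2, mem_filter, mem_univ, true_and] at hw1 hw2
    omega
  have hc1 : T1.card = β := by
    rw [hT1, card_Ico_val n (k*k) (k*k+β) (by omega)]; omega
  have hc2 : k ≤ T2.card := by
    have := le_card_class n 0 (k*k) k j hk hjk (by omega)
    rwa [Nat.mul_div_cancel_left k hk] at this
  calc β + k ≤ (T1 ∪ T2).card := by
        rw [Finset.card_union_of_disjoint hdisj, hc1]; omega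
    _ ≤ (G.neighborFinset v).card := Finset.card_le_card hsub
    _ = G.degree v := rfl

lemma degA {k β γ n : ℕ} (hk : 0 < k) (hn : n = k * k + β + γ) (v : Fin n)
    (hv : v.val < k*k) :
    β / k + γ / k ≤ (graph (k*k) β k n).degree v := by
  classical
  set G := graph (k*k) β k n with hG
  have hdivk : v.val / k < k := (Nat.div_lt_iff_lt_mul hk).2 hv
  have hmodk : v.val % k < k := Nat.mod_lt _ hk
  set T1 := univ.filter (fun w : Fin n =>
    k*k ≤ w.val ∧ w.val < k*k + β ∧ (w.val - k*k) % k = v.val / k) with hT1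
  set T2 := univ.filter (fun w : Fin n =>
    (k*k+β) ≤ w.val ∧ w.val < (k*k+β) + γ ∧ (w.val - (k*k+β)) % k = v.val % k) with hT2
  have hsub : T1 ∪ T2 ⊆ G.neighborFinset v := by
    intro w hw
    rw [SimpleGraph.mem_neighborFinset]
    rcases Finset.mem_union.1 hw with hw | hw
    · simp only [hT1, mem_filter, mem_univ, true_and] at hw
      rw [adj_iff]
      exact ⟨Fin.ne_of_val_ne (by omega), Or.inl (Or.inl ⟨hv, hw.1, Or.inl ⟨hw.2.1, hw.2.2⟩⟩)⟩
    · simp only [hT2, mem_filter, mem_univ, true_and] at hw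
      rw [adj_iff]
      exact ⟨Fin.ne_of_val_ne (by omega), Or.inl (Or.inl ⟨hv, by omega, Or.inr ⟨hw.1, hw.2.2⟩⟩)⟩
  have hdisj : Disjoint T1 T2 := by
    rw [Finset.disjoint_left]
    intro w hw1 hw2
    simp only [hT1, hT2, mem_filter, mem_univ, true_and] at hw1 hw2
    omega
  have hc1 : β / k ≤ T1.card := le_card_class n (k*k) β k (v.val / k) hk hdivk (by omega)
  have hc2 : γ / k ≤ T2.card := le_card_class n (k*k+β) γ k (v.val % k) hk hmodk (by omega)
  calc β / k + γ / k ≤ (T1 ∪ T2).card := by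
        rw [Finset.card_union_of_disjoint hdisj]; omega
    _ ≤ (G.neighborFinset v).card := Finset.card_le_card hsub
    _ = G.degree v := rfl

lemma edges_lb {k β γ n : ℕ} (hk : 0 < k) (hn : n = k * k + β + γ) :
    (k*k) * (β / k + γ / k) + β * (γ + k) + γ * (β + k)
      ≤ 2 * (graph (k*k) β k n).edgeFinset.card := by
  classical
  set G := graph (k*k) β k n with hG
  have h1 := Finset.sum_filter_add_sum_filter_not (univ : Finset (Fin n))
    (fun v : Fin n => v.val < k*k) (fun v => G.degree v)
  have h2 := Finset.sum_filter_add_sum_filter_not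
    (univ.filter (fun v : Fin n => ¬ v.val < k*k))
    (fun v : Fin n => v.val < k*k + β) (fun v => G.degree v)
  have cardA : (univ.filter (fun v : Fin n => v.val < k*k)).card = k*k := by
    have e : (univ.filter (fun v : Fin n => v.val < k*k))
        = univ.filter (fun v : Fin n => 0 ≤ v.val ∧ v.val < k*k) := by
      apply Finset.filter_congr; intro x _; simp
    rw [e, card_Ico_val n 0 (k*k) (by omega)]; omega
  have cardB : ((univ.filter (fun v : Fin n => ¬ v.val < k*k)).filter
      (fun v : Fin n => v.val < k*k + β)).card = β := by
    rw [Finset.filter_filter]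
    have e : (univ.filter fun v : Fin n => ¬ v.val < k*k ∧ v.val < k*k + β)
        = univ.filter (fun v : Fin n => k*k ≤ v.val ∧ v.val < k*k + β) := by
      apply Finset.filter_congr; intro x _; constructor <;> omega
    rw [e, card_Ico_val n (k*k) (k*k+β) (by omega)]; omega
  have cardC : ((univ.filter (fun v : Fin n => ¬ v.val < k*k)).filter
      (fun v : Fin n => ¬ v.val < k*k + β)).card = γ := by
    rw [Finset.filter_filter]
    have e : (univ.filter fun v : Fin n => ¬ v.val < k*k ∧ ¬ v.val < k*k + β)
        = univ.filter (fun v : Fin n => k*k + β ≤ v.val ∧ v.val < n) := by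
      apply Finset.filter_congr; intro x _; constructor <;> omega
    rw [e, card_Ico_val n (k*k+β) n (by omega)]; omega
  have hA : (k*k) * (β / k + γ / k)
      ≤ ∑ v ∈ univ.filter (fun v : Fin n => v.val < k*k), G.degree v := by
    have := Finset.card_nsmul_le_sum (univ.filter (fun v : Fin n => v.val < k*k))
      (fun v => G.degree v) (β / k + γ / k)
      (fun v hv => degA hk hn v (by simpa using (Finset.mem_filter.1 hv).2))
    rwa [cardA, smul_eq_mul] at this
  have hB : β * (γ + k)
      ≤ ∑ v ∈ (univ.filter (fun v : Fin n => ¬ v.val < k*k)).filter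
          (fun v : Fin n => v.val < k*k + β), G.degree v := by
    have := Finset.card_nsmul_le_sum ((univ.filter (fun v : Fin n => ¬ v.val < k*k)).filter
      (fun v : Fin n => v.val < k*k + β)) (fun v => G.degree v) (γ + k)
      (fun v hv => by
        have h' := Finset.mem_filter.1 hv
        have h'' := Finset.mem_filter.1 h'.1
        exact degB hk hn v (by omega) h'.2)
    rwa [cardB, smul_eq_mul] at this
  have hC : γ * (β + k)
      ≤ ∑ v ∈ (univ.filter (fun v : Fin n => ¬ v.val < k*k)).filter
          (fun v : Fin n => ¬ v.val < k*k + β), G.degree v := by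
    have := Finset.card_nsmul_le_sum ((univ.filter (fun v : Fin n => ¬ v.val < k*k)).filter
      (fun v : Fin n => ¬ v.val < k*k + β)) (fun v => G.degree v) (β + k)
      (fun v hv => by
        have h' := Finset.mem_filter.1 hv
        exact degC hk hn v (by omega))
    rwa [cardC, smul_eq_mul] at this
  calc (k*k) * (β / k + γ / k) + β * (γ + k) + γ * (β + k)
      ≤ (∑ v ∈ univ.filter (fun v : Fin n => v.val < k*k), G.degree v)
        + ((∑ v ∈ (univ.filter (fun v : Fin n => ¬ v.val < k*k)).filter
            (fun v : Fin n => v.val < k*k + β), G.degree v)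
          + (∑ v ∈ (univ.filter (fun v : Fin n => ¬ v.val < k*k)).filter
            (fun v : Fin n => ¬ v.val < k*k + β), G.degree v)) := by
        have := add_le_add hA (add_le_add hB hC)
        omega
    _ = ∑ v : Fin n, G.degree v := by rw [h2, h1]
    _ = 2 * G.edgeFinset.card := G.sum_degrees_eq_twice_card_edges


end S16

private lemma edge_cast_lemma (kk b c D C e M : ℝ) (hkk0 : 0 < kk)
    (hER : kk*kk*(D+C) + b*(c+kk) + c*(b+kk) ≤ 2*e)
    (hD2 : b < kk*D + kk) (hC2 : c < kk*C + kk) (hbc : b + c = M)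
    (h2 : c ≤ b) (h3 : b ≤ c + 1) :
    (M^2-1)/4 + kk*M - kk^2 ≤ e := by
  subst hbc
  have hprod : ((b+c)^2-1)/4 ≤ b*c := by nlinarith [mul_nonneg (sub_nonneg.2 h2) (by linarith : (0:ℝ) ≤ c + 1 - b)]
  have p1 : kk*(b - kk) ≤ kk*(kk*D) := mul_le_mul_of_nonneg_left (by linarith) hkk0.le
  have p2 : kk*(c - kk) ≤ kk*(kk*C) := mul_le_mul_of_nonneg_left (by linarith) hkk0.le
  nlinarith [hER, p1, p2, hprod]

private lemma bk_lemma (T D b M x kk nn : ℝ) (hT : T ≤ D + 1) (hkD : D*kk ≤ b)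
    (h2b : 2*b ≤ M + 1) (hD0 : 0 ≤ D) (hT0 : 0 ≤ T) (hx0 : 0 < x) (hxk : x ≤ kk)
    (hxk2 : x^2 ≤ kk^2) (hn : nn = kk^2 + M) (h2x1 : 2*x+1 < x^2) (hM0 : 0 ≤ M) :
    T*(2*x) < nn := by
  have q1 : T*(2*x) ≤ (D+1)*(2*x) := mul_le_mul_of_nonneg_right hT (by positivity)
  have q2 : x*D ≤ kk*D := mul_le_mul_of_nonneg_right hxk hD0
  nlinarith [q1, q2, hkD, h2b, hxk2, h2x1]

set_option maxHeartbeats 1000000 in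
private lemma keyineq (f x kk m nn : ℝ) (hf4 : 4 < f) (hx2 : x^2 = 2*f) (hx0 : 0 < x)
    (hk1 : x ≤ kk) (hk2 : kk ≤ x + 1) (hn : nn = kk^2 + m) (hfn : f < nn/4)
    (hN : 2000 ≤ nn) :
    (m^2 - 1)/4 + kk*m - kk^2 > nn^2/4 - f*nn := by
  have hx28 : 8 < x^2 := by rw [hx2]; linarith
  have hxg2 : 2 < x := by nlinarith
  have hkk0 : 0 < kk := lt_of_lt_of_le hx0 hk1
  have hkk_sq : kk^2 ≤ (x+1)^2 := by nlinarith
  have h2x1 : 2*x + 1 < x^2 := by nlinarith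
  have hkk4f : kk^2 ≤ 4*f := by nlinarith
  have hm0 : 0 ≤ m := by nlinarith
  have hcoef : 1 ≤ 2*f + 2*kk - kk^2 := by
    nlinarith [mul_nonneg (by linarith : (0:ℝ) ≤ x + 1 - kk) (by linarith : (0:ℝ) ≤ x + kk - 1)]
  have M1 : 0 ≤ m * (2*f + 2*kk - kk^2 - 1) := mul_nonneg hm0 (by linarith)
  have final : (m^2-1)/4 + kk*m - kk^2 - (nn^2/4 - f*nn)
      = m*(2*f + 2*kk - kk^2 - 1)/2 + (m/2 + f*kk^2 - kk^2 - kk^4/4 - 1/4) := by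
    rw [hn]; ring
  have key2 : m/2 + f*kk^2 - kk^2 - kk^4/4 - 1/4 > 0 := by
    by_cases hf100 : f ≤ 100
    · have hkk400 : kk^2 ≤ 400 := by nlinarith
      have hm1600 : 1600 ≤ m := by nlinarith
      have hpos : 0 ≤ kk^2 * (4*f - kk^2) := mul_nonneg (sq_nonneg kk) (by linarith)
      nlinarith [hpos, hm1600, hkk400]
    · push_neg at hf100
      have hx14 : 14 < x := by nlinarith
      have hx196 : 196 < x^2 := by
        have h := pow_lt_pow_left₀ hx14 (by norm_num) (n := 2)
        norm_num at h; linarith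
      have hkk3 : kk^2 ≤ 3*f := by
        have h1 : 0 ≤ (x-14)^2 := sq_nonneg _
        have h2 : (x-14)^2 = x^2 - 28*x + 196 := by ring
        have h3 : (x+1)^2 = x^2 + 2*x + 1 := by ring
        linarith
      have h2fkk : 2*f ≤ kk^2 := by
        have h := pow_le_pow_left₀ hx0.le hk1 2
        linarith [hx2 ▸ h]
      have e1 : (2*f) * f ≤ kk^2 * (4*f - kk^2) :=
        mul_le_mul h2fkk (by linarith) (by linarith) (sq_nonneg kk)
      have e3 := mul_pos (show (0:ℝ) < f - 100 by linarith) (show (0:ℝ) < f by linarith)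
      ring_nf at e1 e3 ⊢
      nlinarith [e1, e3, hkk3, hm0, hf100]
  linarith [final, M1, key2]


set_option maxHeartbeats 1000000 in
theorem stmt16 : ∃ N : ℕ, ∀ n : ℕ, N ≤ n → ∀ f : ℝ, 4 < f → f < n / 4 →
    ∃ G : SimpleGraph (Fin n),
      (∀ u v : Fin n, G.Adj u v → ∃ w : Fin n, G.Adj u w ∧ G.Adj v w) ∧
      ((G.edgeFinset.card : ℝ) > (n : ℝ) ^ 2 / 4 - f * n) ∧
      ((bk G : ℝ) < n / (2 * Real.sqrt (2 * f))) := by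
  refine ⟨2000, ?_⟩
  intro n hn f hf4 hfn
  have hf0 : (0:ℝ) < 2*f := by linarith
  set x := Real.sqrt (2*f) with hxdef
  have hx0 : 0 < x := Real.sqrt_pos.2 hf0
  have hx2 : x^2 = 2*f := Real.sq_sqrt hf0.le
  set k := ⌈x⌉₊ with hkdef
  have hxk : x ≤ (k:ℝ) := Nat.le_ceil x
  have hkx : (k:ℝ) ≤ x + 1 := (Nat.ceil_lt_add_one hx0.le).le
  have hk0 : 0 < k := Nat.ceil_pos.2 hx0
  have hn2000 : (2000:ℝ) ≤ (n:ℝ) := by exact_mod_cast hn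
  have hx28 : 8 < x^2 := by rw [hx2]; linarith
  have hxg2 : 2 < x := by nlinarith
  have hkk0 : (0:ℝ) < (k:ℝ) := lt_of_lt_of_le hx0 hxk
  have hkk_sq : (k:ℝ)^2 ≤ x^2 + 2*x + 1 := by
    nlinarith [mul_nonneg (sub_nonneg.2 hkx) (by positivity : (0:ℝ) ≤ x + 1 + (k:ℝ))]
  have h2x1 : 2*x + 1 < x^2 := by nlinarith
  have hx2n : x^2 < (n:ℝ)/2 := by rw [hx2]; linarith
  have h31 : 62*x ≤ x^2 + 961 := by nlinarith [sq_nonneg (x - 31)]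
  have hm4kR : (k:ℝ)^2 + 4*(k:ℝ) + 1 ≤ (n:ℝ) := by linarith
  have hAn : k*k + 4*k + 1 ≤ n := by
    have h : ((k*k + 4*k + 1 : ℕ):ℝ) ≤ (n:ℝ) := by push_cast; nlinarith [hm4kR]
    exact_mod_cast h
  set m := n - k*k with hmdef
  have hm4k : 4*k + 1 ≤ m := by omega
  set β := (m+1)/2 with hβdef
  set γ := m/2 with hγdef
  have hγβ : γ ≤ β := by omega
  have hβγ1 : β ≤ γ + 1 := by omega
  have hsum : β + γ = m := by omega
  have hkβ : k ≤ β := by omega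
  have hkγ : k ≤ γ := by omega
  have hneq : n = k*k + β + γ := by omega
  have hmcast : (m:ℝ) = (n:ℝ) - (k:ℝ)^2 := by
    rw [hmdef]
    push_cast [Nat.cast_sub (by omega : k*k ≤ n)]
    ring
  have hncast : ((n:ℕ):ℝ) = (k:ℝ)^2 + (m:ℝ) := by rw [hmcast]; ring
  refine ⟨S16.graph (k*k) β k n, S16.triangle hk0 hkβ hkγ hneq, ?_, ?_⟩
  · -- edge count
    have hE := S16.edges_lb (β := β) (γ := γ) hk0 hneq
    have hD2 : β < k * (β / k) + k := by
      have h1 := Nat.div_add_mod β k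
      have h2 := Nat.mod_lt β hk0
      omega
    have hC2 : γ < k * (γ / k) + k := by
      have h1 := Nat.div_add_mod γ k
      have h2 := Nat.mod_lt γ hk0
      omega
    have hER : ((k:ℝ)*(k:ℝ)) * (((β/k : ℕ):ℝ) + ((γ/k : ℕ):ℝ))
        + (β:ℝ)*((γ:ℝ)+(k:ℝ)) + (γ:ℝ)*((β:ℝ)+(k:ℝ))
        ≤ 2 * ((S16.graph (k*k) β k n).edgeFinset.card : ℝ) := by
      exact_mod_cast hE
    have hD2R : (β:ℝ) < (k:ℝ)*((β/k : ℕ):ℝ) + (k:ℝ) := by exact_mod_cast hD2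
    have hC2R : (γ:ℝ) < (k:ℝ)*((γ/k : ℕ):ℝ) + (k:ℝ) := by exact_mod_cast hC2
    have hbcR : (β:ℝ) + (γ:ℝ) = (m:ℝ) := by exact_mod_cast hsum
    have hγβR : (γ:ℝ) ≤ (β:ℝ) := by exact_mod_cast hγβ
    have hβγ1R : (β:ℝ) ≤ (γ:ℝ) + 1 := by exact_mod_cast hβγ1
    have he := edge_cast_lemma (k:ℝ) (β:ℝ) (γ:ℝ) ((β/k : ℕ):ℝ) ((γ/k : ℕ):ℝ)
      ((S16.graph (k*k) β k n).edgeFinset.card : ℝ) (m:ℝ)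
      hkk0 hER hD2R hC2R hbcR hγβR hβγ1R
    have hkey := keyineq f x (k:ℝ) (m:ℝ) ((n:ℕ):ℝ) hf4 hx2 hx0 hxk hkx hncast hfn hn2000
    linarith
  · -- booksize
    have hbkN : bk (S16.graph (k*k) β k n) ≤ β / k + 1 := by
      apply Finset.sup_le
      intro p hp
      exact S16.codeg hk0 hγβ hneq p.1 p.2 (Finset.mem_filter.1 hp).2
    have hT : (bk (S16.graph (k*k) β k n) : ℝ) ≤ ((β/k : ℕ):ℝ) + 1 := by exact_mod_cast hbkN
    have hkD : ((β/k : ℕ):ℝ) * (k:ℝ) ≤ (β:ℝ) := by exact_mod_cast Nat.div_mul_le_self β k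
    have h2β : 2*β ≤ m + 1 := by omega
    have h2βR : 2*(β:ℝ) ≤ (m:ℝ) + 1 := by exact_mod_cast h2β
    have hxk2 : x^2 ≤ (k:ℝ)^2 := pow_le_pow_left₀ hx0.le hxk 2
    rw [lt_div_iff₀ (by positivity : (0:ℝ) < 2 * x)]
    exact bk_lemma (bk (S16.graph (k*k) β k n) : ℝ) ((β/k : ℕ):ℝ) (β:ℝ) (m:ℝ) x (k:ℝ)
      ((n:ℕ):ℝ) hT hkD h2βR (Nat.cast_nonneg _) (Nat.cast_nonneg _) hx0 hxk hxk2 hncast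
      h2x1 (Nat.cast_nonneg _)
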